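/- arXiv:2301.13314 — 6 statements merged into one kernel-verified Lean document; each statement's English description precedes it below -/
import Mathlib

section
/- Let g be ρ-weakly convex on a closed convex set X with subgradients bounded in norm by M, and suppose there exist θ > 0 and ρ̂ > ρ such that for every x ∈ X with g(x) = 0 there exists y ∈ X with g(y) + (ρ̂/2)‖y − x‖² ≤ −θ. Then for every x ∈ L := {x ∈ X : g(x) = 0}, every ζ_g ∈ ∂g(x), and every u ∈ N_X(x), one has ‖ζ_g + u‖ ≥ ν := √(2θ(ρ̂ − ρ)). -/
noncomputable section

/-- The normal cone of a convex set `X` at a point `x`. -/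
def normalCone {d : ℕ} (X : Set (EuclideanSpace ℝ (Fin d)))
    (x : EuclideanSpace ℝ (Fin d)) : Set (EuclideanSpace ℝ (Fin d)) :=
  {u | ∀ y ∈ X, (inner ℝ u (y - x) : ℝ) ≤ 0}

/-- Lemma 2 of the paper: under the uniform Slater condition, the
subgradients of `g + δ_X` on the zero-level set `L = {x ∈ X : g x = 0}` are uniformly
bounded away from the origin by `ν = √(2θ(ρ̂ − ρ))`. -/
theorem subgradient_norm_lower_bound_on_level_set
    {d : ℕ} (X : Set (EuclideanSpace ℝ (Fin d)))
    (hXc : IsClosed X) (hXconv : Convex ℝ X)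
    (g : EuclideanSpace ℝ (Fin d) → ℝ)
    (subg : EuclideanSpace ℝ (Fin d) → Set (EuclideanSpace ℝ (Fin d)))
    (ρ ρh M θ : ℝ) (hρ : ρ < ρh) (hθ : 0 < θ)
    -- `g` is `ρ`-weakly convex on `X` (subgradient inequality)
    (hgwc : ∀ x' ∈ X, ∀ ζ ∈ subg x', ∀ z ∈ X,
      g z ≥ g x' + (inner ℝ ζ (z - x') : ℝ) - ρ / 2 * ‖z - x'‖ ^ 2)
    -- subgradients of `g` are bounded in norm by `M` on `X`
    (hM : ∀ x ∈ X, ∀ ζ ∈ subg x, ‖ζ‖ ≤ M)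
    -- uniform Slater condition on the level set
    (hslater : ∀ x ∈ X, g x = 0 → ∃ y ∈ X, g y + ρh / 2 * ‖y - x‖ ^ 2 ≤ -θ) :
    ∀ x ∈ X, g x = 0 → ∀ ζg ∈ subg x, ∀ u ∈ normalCone X x,
      ‖ζg + u‖ ≥ Real.sqrt (2 * θ * (ρh - ρ)) := by
  intro x hx hgx ζg hζg u hu
  obtain ⟨y, hy, hsl⟩ := hslater x hx hgx
  have hwc := hgwc x hx ζg hζg y hy
  have hun := hu y hy
  set t := ‖y - x‖ with ht
  set v := ζg + u with hv
  -- inner (ζg + u) (y - x) ≥ -‖v‖ * t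
  have hcs : -(‖v‖ * t) ≤ (inner ℝ v (y - x) : ℝ) := by
    have := abs_real_inner_le_norm v (y - x)
    have h2 := neg_abs_le (inner ℝ v (y - x) : ℝ)
    nlinarith
  have hinner : (inner ℝ v (y - x) : ℝ) = (inner ℝ ζg (y - x) : ℝ) + (inner ℝ u (y - x) : ℝ) := by
    rw [hv, inner_add_left]
  have hkey : ‖v‖ * t ≥ θ + (ρh - ρ) / 2 * t ^ 2 := by
    nlinarith [hcs, hinner, hun, hwc, hsl]
  have ht0 : 0 < t := by
    rcases lt_or_eq_of_le (norm_nonneg (y - x)) with h | h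
    · exact h
    · exfalso
      rw [show t = (0:ℝ) from ht.trans h.symm] at hkey
      nlinarith [hkey]
  have ha : 0 < ρh - ρ := by linarith
  have hr : 0 ≤ 2 * θ * (ρh - ρ) := by positivity
  have hrs := Real.sq_sqrt hr
  have hrn := Real.sqrt_nonneg (2 * θ * (ρh - ρ))
  set r := Real.sqrt (2 * θ * (ρh - ρ))
  by_contra hlt
  push_neg at hlt
  nlinarith [sq_nonneg (r - (ρh - ρ) * t), mul_pos ha ht0, norm_nonneg v]
end
end

section
/- Projected subgradient with Polyak stepsize contracts distance to the sublevel set: let g₊ be ρ-weakly convex on closed convex X with subgradients bounded by M, let S = {x ∈ X : g₊(x) = 0} be nonempty, and suppose the error bound (ν/2)dist(x, S) ≤ g₊(x) holds for all x with dist(x, S) ≤ ν/ρ, where 0 < ν ≤ 2M. If dist(x, S) ≤ ν/(4ρ) and x⁺ = proj_X(x − η ζ) with ζ ∈ ∂g₊(x), ζ ≠ 0, and η = g₊(x)/‖ζ‖², then dist²(x⁺, S) ≤ (1 − ν²/(8M²))·dist²(x, S). -/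
noncomputable section

lemma polyak_alg1 {E G c ρ I : ℝ} (hc : 0 < c) (hG : 0 ≤ G)
    (hI : G - ρ / 2 * E ^ 2 ≤ I) :
    E ^ 2 - 2 * (G / c * I) + (G / c) ^ 2 * c ≤ (1 + ρ * G / c) * E ^ 2 - G ^ 2 / c := by
  have h1 : 0 ≤ G / c := by positivity
  have h2 : G / c * (2 * G - ρ * E ^ 2 - 2 * I) ≤ 0 :=
    mul_nonpos_of_nonneg_of_nonpos h1 (by linarith)
  have e1 : (G / c) ^ 2 * c = G ^ 2 / c := by field_simp
  have h2' : 2 * (G ^ 2 / c) - G / c * (ρ * E ^ 2) - 2 * (G / c * I) ≤ 0 := by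
    have e : G / c * (2 * G - ρ * E ^ 2 - 2 * I)
        = 2 * (G ^ 2 / c) - G / c * (ρ * E ^ 2) - 2 * (G / c * I) := by ring
    linarith [e ▸ h2]
  have e4 : ρ * G / c * E ^ 2 = G / c * (ρ * E ^ 2) := by ring
  linarith [h2', e1, e4]

lemma polyak_alg2 {D G c ρ M ν : ℝ} (hc : 0 < c) (hcM : c ≤ M ^ 2) (hM : 0 < M)
    (hν : 0 < ν) (hG : ν / 2 * D ≤ G) (hG0 : 0 ≤ G) (hD0 : 0 ≤ D)
    (hρDG : ρ * D ^ 2 ≤ G / 2) :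
    (1 + ρ * G / c) * D ^ 2 - G ^ 2 / c ≤ (1 - ν ^ 2 / (8 * M ^ 2)) * D ^ 2 := by
  have h1 : 0 ≤ G / c := by positivity
  have step1 : (1 + ρ * G / c) * D ^ 2 - G ^ 2 / c ≤ D ^ 2 - G ^ 2 / (2 * c) := by
    have h2 : G / c * (ρ * D ^ 2) ≤ G / c * (G / 2) :=
      mul_le_mul_of_nonneg_left hρDG h1
    have e1 : ρ * G / c * D ^ 2 = G / c * (ρ * D ^ 2) := by ring
    have e2 : G ^ 2 / c - G ^ 2 / (2 * c) = G / c * (G / 2) := by field_simp; ring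
    nlinarith [h2, e1, e2]
  have step2 : D ^ 2 - G ^ 2 / (2 * c) ≤ D ^ 2 - G ^ 2 / (2 * M ^ 2) := by
    have : G ^ 2 / (2 * M ^ 2) ≤ G ^ 2 / (2 * c) := by
      apply div_le_div_of_nonneg_left (sq_nonneg G) (by positivity)
      linarith
    linarith
  have step3 : D ^ 2 - G ^ 2 / (2 * M ^ 2) ≤ (1 - ν ^ 2 / (8 * M ^ 2)) * D ^ 2 := by
    have hsq : (ν / 2 * D) ^ 2 ≤ G ^ 2 := by
      apply pow_le_pow_left₀ (by positivity) hG
    have : (ν / 2 * D) ^ 2 / (2 * M ^ 2) ≤ G ^ 2 / (2 * M ^ 2) := by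
      apply div_le_div_of_nonneg_right hsq (by positivity)
    have e : (ν / 2 * D) ^ 2 / (2 * M ^ 2) = ν ^ 2 / (8 * M ^ 2) * D ^ 2 := by
      field_simp; ring
    nlinarith [this, e]
  linarith

lemma polyak_alg3 {a b : ℝ} (ha : 0 ≤ a) (hb : 0 ≤ b) (h : a ^ 2 ≤ b * a) : a ≤ b := by
  nlinarith


/-- Auxiliary limit lemma: if `L ≤ A (D+ε)² − B` for every `ε > 0`, with `A ≥ 0`,
then `L ≤ A D² − B`. -/
lemma polyak_limit_aux {L A D B : ℝ} (hA : 0 ≤ A)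
    (h : ∀ ε > (0:ℝ), L ≤ A * (D + ε) ^ 2 - B) : L ≤ A * D ^ 2 - B := by
  have hT : Filter.Tendsto (fun ε : ℝ => A * (D + ε) ^ 2 - B) (nhdsWithin 0 (Set.Ioi 0))
      (nhds (A * D ^ 2 - B)) := by
    have hcont : Continuous (fun ε : ℝ => A * (D + ε) ^ 2 - B) := by continuity
    have := hcont.tendsto 0
    simp only [add_zero] at this
    exact this.mono_left nhdsWithin_le_nhds
  refine ge_of_tendsto hT ?_
  filter_upwards [eventually_mem_nhdsWithin] with ε hε
  exact h ε hε

set_option maxHeartbeats 1000000 in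
/-- one step of projected subgradient descent on `g₊` with Polyak
stepsize contracts the squared distance to the zero set `S` by a factor
`1 − ν²/(8M²)`, provided `dist(x, S) ≤ ν/(4ρ)`. -/
theorem polyak_step_contracts_distance
    {d : ℕ} (X : Set (EuclideanSpace ℝ (Fin d)))
    (hXc : IsClosed X) (hXconv : Convex ℝ X) (hXne : X.Nonempty)
    (gp : EuclideanSpace ℝ (Fin d) → ℝ)
    (subgp : EuclideanSpace ℝ (Fin d) → Set (EuclideanSpace ℝ (Fin d)))
    (ρ M ν : ℝ) (hν : 0 < ν) (hνM : ν ≤ 2 * M)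
    -- `g₊` is `ρ`-weakly convex on `X` (subgradient inequality)
    (hwc : ∀ x' ∈ X, ∀ ζ ∈ subgp x', ∀ z ∈ X,
      gp z ≥ gp x' + (inner ℝ ζ (z - x') : ℝ) - ρ / 2 * ‖z - x'‖ ^ 2)
    -- subgradients bounded by `M`
    (hM : ∀ x ∈ X, ∀ ζ ∈ subgp x, ‖ζ‖ ≤ M)
    (S : Set (EuclideanSpace ℝ (Fin d))) (hSdef : S = {x ∈ X | gp x = 0})
    (hSne : S.Nonempty)
    -- error bound `(ν/2)·dist(x, S) ≤ g₊(x)` whenever `dist(x, S) ≤ ν/ρ`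
    (heb : ∀ x ∈ X, Metric.infDist x S ≤ ν / ρ →
      ν / 2 * Metric.infDist x S ≤ gp x)
    (x : EuclideanSpace ℝ (Fin d)) (hx : x ∈ X)
    (hdist : Metric.infDist x S ≤ ν / (4 * ρ))
    (ζ : EuclideanSpace ℝ (Fin d)) (hζ : ζ ∈ subgp x) (hζ0 : ζ ≠ 0)
    -- `xp = proj_X (x − η ζ)` with Polyak stepsize `η = g₊(x)/‖ζ‖²`
    (xp : EuclideanSpace ℝ (Fin d)) (hxpX : xp ∈ X)
    (hproj : ∀ y ∈ X, ‖xp - (x - (gp x / ‖ζ‖ ^ 2) • ζ)‖ ≤ ‖y - (x - (gp x / ‖ζ‖ ^ 2) • ζ)‖) :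
    Metric.infDist xp S ^ 2 ≤ (1 - ν ^ 2 / (8 * M ^ 2)) * Metric.infDist x S ^ 2 := by
  obtain ⟨D, hD⟩ : ∃ D, D = Metric.infDist x S := ⟨_, rfl⟩
  rw [← hD] at hdist ⊢
  have hD0 : 0 ≤ D := hD ▸ Metric.infDist_nonneg
  have hM0 : 0 < M := by linarith
  have hζM : ‖ζ‖ ≤ M := hM x hx ζ hζ
  have hζpos : 0 < ‖ζ‖ := norm_pos_iff.mpr hζ0
  obtain ⟨c, hc⟩ : ∃ c, c = ‖ζ‖ ^ 2 := ⟨_, rfl⟩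
  have hcpos : 0 < c := by rw [hc]; positivity
  have hcM : c ≤ M ^ 2 := by rw [hc]; nlinarith
  obtain ⟨G, hGdef⟩ : ∃ G, G = gp x := ⟨_, rfl⟩
  rw [← hGdef, ← hc] at hproj
  -- ρ ≥ 0
  have hρ0 : 0 ≤ ρ := by
    by_contra h
    push_neg at h
    have : ν / (4 * ρ) < 0 := div_neg_of_pos_of_neg hν (by linarith)
    linarith
  -- error bound applies
  have hDνρ : D ≤ ν / ρ := by
    rcases hρ0.eq_or_lt with h | h
    · have h1 : ν / (4 * ρ) = 0 := by rw [← h]; simp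
      have h2 : ν / ρ = 0 := by rw [← h]; simp
      rw [h2]; linarith [hdist, h1 ▸ hdist]
    · calc D ≤ ν / (4 * ρ) := hdist
        _ ≤ ν / ρ := by
          apply div_le_div_of_nonneg_left hν.le h; linarith
  have hG : ν / 2 * D ≤ G := by rw [hGdef, hD]; exact heb x hx (hD ▸ hDνρ)
  have hG0 : 0 ≤ G := by nlinarith
  have hρD : ρ * D ≤ ν / 4 := by
    rcases hρ0.eq_or_lt with h | h
    · rw [← h]; simp; positivity
    · have : ν / (4 * ρ) * ρ = ν / 4 := by field_simp
      nlinarith [mul_le_mul_of_nonneg_right hdist h.le]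
  have hρDG : ρ * D ^ 2 ≤ G / 2 := by nlinarith
  obtain ⟨A, hA⟩ : ∃ A, A = 1 + ρ * G / c := ⟨_, rfl⟩
  have hA0 : 0 ≤ A := by
    have h1 : 0 ≤ ρ * G / c := by positivity
    rw [hA]; linarith
  obtain ⟨B, hB⟩ : ∃ B, B = G ^ 2 / c := ⟨_, rfl⟩
  obtain ⟨L, hL⟩ : ∃ L, L = Metric.infDist xp S ^ 2 := ⟨_, rfl⟩
  rw [← hL]
  have hL0 : 0 ≤ L := by rw [hL]; positivity
  obtain ⟨u, hu⟩ : ∃ u, u = x - (G / c) • ζ := ⟨_, rfl⟩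
  rw [← hu] at hproj
  -- per-epsilon bound
  have hstep : ∀ ε > (0:ℝ), L ≤ A * (D + ε) ^ 2 - B := by
    intro ε hε
    obtain ⟨xd, hxdS, hxd⟩ := (Metric.infDist_lt_iff hSne).mp
      (by rw [← hD]; linarith : Metric.infDist x S < D + ε)
    have hxdX : xd ∈ X := by rw [hSdef] at hxdS; exact hxdS.1
    have hgpxd : gp xd = 0 := by rw [hSdef] at hxdS; exact hxdS.2
    obtain ⟨E, hE⟩ : ∃ E, E = ‖x - xd‖ := ⟨_, rfl⟩
    have hEd : E < D + ε := by rw [hE, ← dist_eq_norm]; exact hxd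
    have hE0 : 0 ≤ E := hE ▸ norm_nonneg _
    -- variational inequality
    haveI : Nonempty X := hXne.to_subtype
    have hinf : ‖u - xp‖ = ⨅ w : X, ‖u - w‖ := by
      apply le_antisymm
      · apply le_ciInf
        intro w
        rw [norm_sub_rev, norm_sub_rev u (w : EuclideanSpace ℝ (Fin d))]
        exact hproj w w.2
      · have hbdd : BddBelow (Set.range fun w : X => ‖u - (w : EuclideanSpace ℝ (Fin d))‖) := by
          refine ⟨0, ?_⟩
          rintro r ⟨w, rfl⟩
          exact norm_nonneg _
        exact ciInf_le hbdd ⟨xp, hxpX⟩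
    have hVI : (inner ℝ (u - xp) (xd - xp) : ℝ) ≤ 0 :=
      (norm_eq_iInf_iff_real_inner_le_zero hXconv hxpX).mp hinf xd hxdX
    -- xp closer to xd than u
    have hexp : ‖xp - xd‖ ^ 2 = inner ℝ (xp - u) (xp - xd) + (inner ℝ (u - xd) (xp - xd) : ℝ) := by
      rw [← inner_add_left, show xp - u + (u - xd) = xp - xd by abel,
        real_inner_self_eq_norm_sq]
    have hflip : (inner ℝ (xp - u) (xp - xd) : ℝ) = inner ℝ (u - xp) (xd - xp) := by
      rw [show xp - u = -(u - xp) by abel, show xp - xd = -(xd - xp) by abel,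
        inner_neg_neg]
    have hCS : (inner ℝ (u - xd) (xp - xd) : ℝ) ≤ ‖u - xd‖ * ‖xp - xd‖ :=
      real_inner_le_norm _ _
    have hcontr : ‖xp - xd‖ ≤ ‖u - xd‖ := by
      refine polyak_alg3 (norm_nonneg _) (norm_nonneg _) ?_
      have h1 : (inner ℝ (xp - u) (xp - xd) : ℝ) ≤ 0 := by rw [hflip]; exact hVI
      linarith [hexp, h1, hCS]
    -- expand ‖u - xd‖²
    have hux : u - xd = (x - xd) - (G / c) • ζ := by rw [hu]; abel
    have hexp2 : ‖u - xd‖ ^ 2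
        = E ^ 2 - 2 * ((G / c) * inner ℝ (x - xd) ζ) + (G / c) ^ 2 * c := by
      rw [hux, @norm_sub_sq_real, real_inner_smul_right, norm_smul,
        Real.norm_eq_abs, abs_of_nonneg (by positivity : (0:ℝ) ≤ G / c), hE, hc]
      ring
    -- weak convexity
    have hwq := hwc x hx ζ hζ xd hxdX
    rw [hgpxd] at hwq
    have hinner1 : (inner ℝ ζ (xd - x) : ℝ) = - inner ℝ (x - xd) ζ := by
      rw [real_inner_comm, show xd - x = -(x - xd) by abel, inner_neg_left]
    have hnrev : ‖xd - x‖ = E := by rw [hE, norm_sub_rev]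
    have hlow : (inner ℝ (x - xd) ζ : ℝ) ≥ G - ρ / 2 * E ^ 2 := by
      rw [hinner1, hnrev, ← hGdef] at hwq; linarith
    -- combine
    have hfin : ‖u - xd‖ ^ 2 ≤ A * E ^ 2 - B := by
      rw [hexp2, hA, hB]
      exact polyak_alg1 hcpos hG0 hlow
    have hmono : A * E ^ 2 ≤ A * (D + ε) ^ 2 :=
      mul_le_mul_of_nonneg_left (pow_le_pow_left₀ hE0 hEd.le 2) hA0
    have hLd : Metric.infDist xp S ≤ ‖xp - xd‖ := by
      rw [← dist_eq_norm]; exact Metric.infDist_le_dist_of_mem hxdS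
    have hL2 : L ≤ ‖xp - xd‖ ^ 2 := by
      rw [hL]
      exact pow_le_pow_left₀ Metric.infDist_nonneg hLd 2
    have h3 : ‖xp - xd‖ ^ 2 ≤ ‖u - xd‖ ^ 2 := pow_le_pow_left₀ (norm_nonneg _) hcontr 2
    linarith [hL2, h3, hfin, hmono]
  -- limit ε → 0
  have hlim : L ≤ A * D ^ 2 - B := polyak_limit_aux hA0 hstep
  -- final algebra
  have key : A * D ^ 2 - B ≤ (1 - ν ^ 2 / (8 * M ^ 2)) * D ^ 2 := by
    rw [hA, hB]
    exact polyak_alg2 hcpos hcM hM0 hν hG hG0 hD0 hρDG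
  linarith
end
end

section
/- Iterating the Polyak-stepsize contraction preserves proximity: under the setting of the previous contraction lemma, if a sequence x^(0), x^(1), … in X is generated by x^(t+1) = proj_X(x^(t) − η_t ζ^(t)) with ζ^(t) ∈ ∂g₊(x^(t)), η_t = g₊(x^(t))/‖ζ^(t)‖² when ζ^(t) ≠ 0 and η_t = 0 otherwise, and dist(x^(0), S) ≤ ν/(4ρ), then dist(x^(t), S) ≤ dist(x^(0), S) for all t ≥ 0, and dist²(x^(t+1), S) ≤ (1 − ν²/(8M²))·dist²(x^(t), S) for all t ≥ 0. -/
set_option maxHeartbeats 1000000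

noncomputable section

open Filter Topology

/-- limiting argument: if `a ≤ f r` for all `r > D`, with `f` continuous, then `a ≤ f D`. -/
private lemma le_of_forall_gt_le {a D : ℝ} {f : ℝ → ℝ} (hf : Continuous f)
    (h : ∀ r, D < r → a ≤ f r) : a ≤ f D := by
  have h1 : Tendsto f (𝓝[>] D) (𝓝 (f D)) :=
    (hf.tendsto D).mono_left nhdsWithin_le_nhds
  exact ge_of_tendsto h1 (eventually_nhdsWithin_of_forall fun r hr => h r hr)

/-- Lemma A.4 / Theorem 4.1 of Davis et al.: iterating the projected
subgradient method on `g₊` with Polyak stepsizes, starting with `dist(x⁰, S) ≤ ν/(4ρ)`,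
keeps the iterates at distance at most `dist(x⁰, S)` from `S`, and each step contracts
the squared distance by the factor `1 − ν²/(8M²)`. -/
theorem polyak_iterates_stay_close_and_contract
    {d : ℕ} (X : Set (EuclideanSpace ℝ (Fin d)))
    (hXc : IsClosed X) (hXconv : Convex ℝ X) (hXne : X.Nonempty)
    (gp : EuclideanSpace ℝ (Fin d) → ℝ)
    (subgp : EuclideanSpace ℝ (Fin d) → Set (EuclideanSpace ℝ (Fin d)))
    (ρ M ν : ℝ) (hν : 0 < ν) (hνM : ν ≤ 2 * M)
    -- `g₊` is `ρ`-weakly convex on `X` (subgradient inequality)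
    (hwc : ∀ x' ∈ X, ∀ ζ ∈ subgp x', ∀ z ∈ X,
      gp z ≥ gp x' + (inner ℝ ζ (z - x') : ℝ) - ρ / 2 * ‖z - x'‖ ^ 2)
    -- subgradients bounded by `M`
    (hM : ∀ x ∈ X, ∀ ζ ∈ subgp x, ‖ζ‖ ≤ M)
    (S : Set (EuclideanSpace ℝ (Fin d))) (hSdef : S = {x ∈ X | gp x = 0})
    (hSne : S.Nonempty)
    -- error bound `(ν/2)·dist(x, S) ≤ g₊(x)` whenever `dist(x, S) ≤ ν/ρ`
    (heb : ∀ x ∈ X, Metric.infDist x S ≤ ν / ρ →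
      ν / 2 * Metric.infDist x S ≤ gp x)
    -- the sequence of iterates, subgradients and Polyak stepsizes
    (x : ℕ → EuclideanSpace ℝ (Fin d)) (ζ : ℕ → EuclideanSpace ℝ (Fin d)) (η : ℕ → ℝ)
    (hx0 : x 0 ∈ X)
    (hdist0 : Metric.infDist (x 0) S ≤ ν / (4 * ρ))
    (hζ : ∀ t, ζ t ∈ subgp (x t))
    (hη : ∀ t, (ζ t ≠ 0 → η t = gp (x t) / ‖ζ t‖ ^ 2) ∧ (ζ t = 0 → η t = 0))
    -- `x (t+1) = proj_X (x t − η t • ζ t)`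
    (hstep : ∀ t, x (t + 1) ∈ X ∧
      ∀ y ∈ X, ‖x (t + 1) - (x t - η t • ζ t)‖ ≤ ‖y - (x t - η t • ζ t)‖) :
    (∀ t, Metric.infDist (x t) S ≤ Metric.infDist (x 0) S) ∧
    (∀ t, Metric.infDist (x (t + 1)) S ^ 2 ≤
      (1 - ν ^ 2 / (8 * M ^ 2)) * Metric.infDist (x t) S ^ 2) := by
  have hM0 : 0 < M := by linarith
  have hρ0 : 0 ≤ ρ := by
    by_contra h
    push_neg at h
    have h1 : ν / (4 * ρ) < 0 := div_neg_of_pos_of_neg hν (by linarith)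
    have h2 : (0:ℝ) ≤ Metric.infDist (x 0) S := Metric.infDist_nonneg
    linarith
  have hSX : ∀ z ∈ S, z ∈ X := by intro z hz; rw [hSdef] at hz; exact hz.1
  have hSg : ∀ z ∈ S, gp z = 0 := by intro z hz; rw [hSdef] at hz; exact hz.2
  -- projection inequality in squared form
  have hproj : ∀ t, ∀ w ∈ X,
      ‖x (t + 1) - w‖ ^ 2 ≤ ‖(x t - η t • ζ t) - w‖ ^ 2 := by
    intro t w hw
    set p := x t - η t • ζ t with hp
    set q := x (t + 1) with hq
    have hqX : q ∈ X := (hstep t).1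
    have hinf : ‖p - q‖ = ⨅ w : X, ‖p - w‖ := by
      haveI : Nonempty X := ⟨⟨q, hqX⟩⟩
      apply le_antisymm
      · apply le_ciInf
        intro w
        have := (hstep t).2 w w.2
        rwa [norm_sub_rev p q, norm_sub_rev p w]
      · have hbdd : BddBelow (Set.range fun w : X => ‖p - (w : EuclideanSpace ℝ (Fin d))‖) := by
          refine ⟨0, ?_⟩
          rintro r ⟨w, rfl⟩
          exact norm_nonneg _
        exact ciInf_le hbdd ⟨q, hqX⟩
    have hchar : ∀ w ∈ X, (inner ℝ (p - q) (w - q) : ℝ) ≤ 0 :=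
      (norm_eq_iInf_iff_real_inner_le_zero hXconv hqX).mp hinf
    have hiw := hchar w hw
    have hexp : ‖p - w‖ ^ 2
        = ‖p - q‖ ^ 2 + 2 * (inner ℝ (p - q) (q - w) : ℝ) + ‖q - w‖ ^ 2 := by
      have h1 : p - w = (p - q) + (q - w) := by abel
      rw [h1, norm_add_sq_real]
    have h2 : (inner ℝ (p - q) (q - w) : ℝ) = -(inner ℝ (p - q) (w - q) : ℝ) := by
      rw [← inner_neg_right]; congr 1; abel
    nlinarith [sq_nonneg ‖p - q‖, hexp, h2, hiw]
  -- the single-step contraction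
  have key : ∀ t, x t ∈ X → Metric.infDist (x t) S ≤ ν / (4 * ρ) →
      Metric.infDist (x (t + 1)) S ^ 2
        ≤ (1 - ν ^ 2 / (8 * M ^ 2)) * Metric.infDist (x t) S ^ 2 := by
    intro t hxt hDle
    set D := Metric.infDist (x t) S with hD
    have hD0 : 0 ≤ D := Metric.infDist_nonneg
    have hρD : ρ * D ≤ ν / 4 := by
      rcases eq_or_lt_of_le hρ0 with h | h
      · rw [← h]; simp; positivity
      · rw [le_div_iff₀ (by linarith : (0:ℝ) < 4 * ρ)] at hDle
        nlinarith
    have hDν : D ≤ ν / ρ := by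
      rcases eq_or_lt_of_le hρ0 with h | h
      · rw [← h] at hDle ⊢
        simpa using hDle
      · have h4 : ν / (4 * ρ) ≤ ν / ρ := by
          rw [div_le_div_iff₀ (by linarith) h]; nlinarith
        linarith
    have hg : ν / 2 * D ≤ gp (x t) := heb _ hxt hDν
    have hgnn : 0 ≤ gp (x t) := le_trans (by positivity) hg
    -- pick near-optimal points in S
    have hnear : ∀ r, D < r → ∃ z ∈ S, ‖x t - z‖ < r := by
      intro r hr
      obtain ⟨z, hzS, hz⟩ := (Metric.infDist_lt_iff hSne).mp (lt_of_le_of_lt le_rfl hr)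
      exact ⟨z, hzS, by rwa [← dist_eq_norm]⟩
    by_cases hz0 : ζ t = 0
    · -- zero subgradient: the iterate does not move, and D = 0
      have hη0 : η t = 0 := (hη t).2 hz0
      have hqeq : x (t + 1) = x t := by
        have h1 := (hstep t).2 (x t) hxt
        rw [hη0] at h1
        simp at h1
        have h2 : ‖x (t+1) - x t‖ ≤ 0 := by simpa using h1
        have h3 : x (t+1) - x t = 0 := by
          rw [← norm_le_zero_iff]; exact h2
        linear_combination (norm := module) h3
      have hub : gp (x t) ≤ (fun r => ρ / 2 * r ^ 2) D := by
        apply le_of_forall_gt_le (f := fun r => ρ / 2 * r ^ 2) (D := D) (by continuity)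
        intro r hr
        obtain ⟨z, hzS, hz⟩ := hnear r hr
        have hw := hwc _ hxt _ (hζ t) z (hSX z hzS)
        rw [hz0] at hw
        simp [hSg z hzS] at hw
        have hzx : ‖z - x t‖ ^ 2 ≤ r ^ 2 := by
          rw [norm_sub_rev]
          have h0 : (0:ℝ) ≤ ‖x t - z‖ := norm_nonneg _
          nlinarith
        show gp (x t) ≤ ρ / 2 * r ^ 2
        nlinarith
      have hub' : gp (x t) ≤ ρ / 2 * D ^ 2 := hub
      have hDzero : D = 0 := by
        nlinarith [mul_le_mul_of_nonneg_right hρD hD0]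
      rw [hqeq, ← hD, hDzero]
      simp
    · -- nonzero subgradient: Polyak step
      set g := gp (x t) with hgdef
      set N := ‖ζ t‖ with hN
      have hN0 : 0 < N := norm_pos_iff.mpr hz0
      have hNM : N ≤ M := hM _ hxt _ (hζ t)
      have hηt : η t = g / N ^ 2 := (hη t).1 hz0
      have hηnn : 0 ≤ η t := by rw [hηt]; positivity
      have hηg : η t * g = g ^ 2 / N ^ 2 := by rw [hηt]; ring
      have hηN2 : η t ^ 2 * N ^ 2 = η t * g := by
        rw [hηt]; field_simp
      have hmain : Metric.infDist (x (t + 1)) S ^ 2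
          ≤ (fun r => r ^ 2 * (1 + ρ * η t) - η t * g) D := by
        apply le_of_forall_gt_le (f := fun r => r ^ 2 * (1 + ρ * η t) - η t * g)
          (D := D) (by continuity)
        intro r hr
        obtain ⟨z, hzS, hz⟩ := hnear r hr
        have hzX := hSX z hzS
        have h1 : Metric.infDist (x (t + 1)) S ^ 2 ≤ ‖x (t + 1) - z‖ ^ 2 := by
          have hd := Metric.infDist_le_dist_of_mem hzS (x := x (t + 1))
          rw [dist_eq_norm] at hd
          have h0 : (0:ℝ) ≤ Metric.infDist (x (t + 1)) S := Metric.infDist_nonneg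
          nlinarith
        have h2 := hproj t z hzX
        have h3 : ‖(x t - η t • ζ t) - z‖ ^ 2
            = ‖x t - z‖ ^ 2 - 2 * (η t * (inner ℝ (ζ t) (x t - z) : ℝ))
              + η t ^ 2 * N ^ 2 := by
          have he : (x t - η t • ζ t) - z = (x t - z) - η t • ζ t := by abel
          rw [he, norm_sub_sq_real, real_inner_smul_right, real_inner_comm,
            norm_smul, Real.norm_eq_abs]
          rw [mul_pow, sq_abs]
        have h4 : g - ρ / 2 * ‖x t - z‖ ^ 2 ≤ (inner ℝ (ζ t) (x t - z) : ℝ) := by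
          have hw := hwc _ hxt _ (hζ t) z hzX
          rw [hSg z hzS] at hw
          have hi : (inner ℝ (ζ t) (z - x t) : ℝ) = -(inner ℝ (ζ t) (x t - z) : ℝ) := by
            rw [← inner_neg_right]; congr 1; abel
          rw [hi, norm_sub_rev z (x t)] at hw
          linarith
        have h5 : ‖x t - z‖ ^ 2 ≤ r ^ 2 := by
          have h0 : (0:ℝ) ≤ ‖x t - z‖ := norm_nonneg _
          nlinarith
        have h4' : η t * (g - ρ / 2 * ‖x t - z‖ ^ 2)
            ≤ η t * (inner ℝ (ζ t) (x t - z) : ℝ) :=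
          mul_le_mul_of_nonneg_left h4 hηnn
        have h6 : ‖(x t - η t • ζ t) - z‖ ^ 2
            ≤ ‖x t - z‖ ^ 2 * (1 + ρ * η t) - η t * g := by
          rw [h3]
          nlinarith [h4', hηN2]
        have h7 : ‖x t - z‖ ^ 2 * (1 + ρ * η t) ≤ r ^ 2 * (1 + ρ * η t) := by
          apply mul_le_mul_of_nonneg_right h5
          have : 0 ≤ ρ * η t := mul_nonneg hρ0 hηnn
          linarith
        show Metric.infDist (x (t + 1)) S ^ 2 ≤ r ^ 2 * (1 + ρ * η t) - η t * g
        linarith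
      have hmain' : Metric.infDist (x (t + 1)) S ^ 2
          ≤ D ^ 2 + η t * (ρ * D ^ 2 - g) := by
        have : D ^ 2 * (1 + ρ * η t) - η t * g = D ^ 2 + η t * (ρ * D ^ 2 - g) := by
          ring
        have hm : Metric.infDist (x (t + 1)) S ^ 2
            ≤ D ^ 2 * (1 + ρ * η t) - η t * g := hmain
        linarith
      -- final algebra
      have hρD2 : ρ * D ^ 2 - g ≤ -g / 2 := by
        have h1 : ρ * D * D ≤ ν / 4 * D := mul_le_mul_of_nonneg_right hρD hD0
        nlinarith
      have h3' : η t * (ρ * D ^ 2 - g) ≤ η t * (-g / 2) :=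
        mul_le_mul_of_nonneg_left hρD2 hηnn
      have heq2 : η t * (-g / 2) = -(g ^ 2 / (2 * N ^ 2)) := by
        rw [hηt]; ring
      have h5 : ν ^ 2 * D ^ 2 / (8 * M ^ 2) ≤ g ^ 2 / (2 * N ^ 2) := by
        rw [div_le_div_iff₀ (by positivity) (by positivity)]
        have hνD : ν * D ≤ 2 * g := by linarith
        have hνDnn : 0 ≤ ν * D := by positivity
        have ha : ν ^ 2 * D ^ 2 ≤ 4 * g ^ 2 := by nlinarith
        have hb : N ^ 2 ≤ M ^ 2 := by nlinarith
        nlinarith [mul_le_mul ha hb (by positivity) (by positivity)]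
      have heq3 : (1 - ν ^ 2 / (8 * M ^ 2)) * D ^ 2
          = D ^ 2 - ν ^ 2 * D ^ 2 / (8 * M ^ 2) := by ring
      rw [heq3]
      linarith [hmain', h3', h5, heq2.le, heq2.ge]
  -- induction on t
  have main : ∀ t, x t ∈ X ∧ Metric.infDist (x t) S ≤ ν / (4 * ρ) ∧
      Metric.infDist (x t) S ≤ Metric.infDist (x 0) S := by
    intro t
    induction t with
    | zero => exact ⟨hx0, hdist0, le_refl _⟩
    | succ n ih =>
      obtain ⟨h1, h2, h3⟩ := ih
      have hk := key n h1 h2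
      have hc : 0 ≤ ν ^ 2 / (8 * M ^ 2) := by positivity
      have hsq : Metric.infDist (x (n + 1)) S ^ 2 ≤ Metric.infDist (x n) S ^ 2 := by
        nlinarith [Metric.infDist_nonneg (x := x n) (s := S)]
      have hle : Metric.infDist (x (n + 1)) S ≤ Metric.infDist (x n) S := by
        nlinarith [Metric.infDist_nonneg (x := x n) (s := S),
          Metric.infDist_nonneg (x := x (n + 1)) (s := S)]
      exact ⟨(hstep n).1, le_trans hle h2, le_trans hle h3⟩
  exact ⟨fun t => (main t).2.2, fun t => key t (main t).1 (main t).2.1⟩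
end
end

section
/- Multiplier bound under the uniform Slater condition: let f, g be ρ-weakly convex on closed convex X with subgradients bounded by M, and suppose ρ̂ > ρ, θ > 0, and y ∈ X satisfy g(y) + (ρ̂/2)‖y − x‖² ≤ −θ for a given x ∈ X. Let x̂ minimize f(z) + (ρ̂/2)‖z − x‖² over {z ∈ X : g(z) + (ρ̂/2)‖z − x‖² ≤ 0}, with KKT multiplier λ̂ ≥ 0: ζ_f + ρ̂(x̂ − x) + λ̂(ζ_g + ρ̂(x̂ − x)) + u = 0 for some ζ_f ∈ ∂f(x̂), ζ_g ∈ ∂g(x̂), u ∈ N_X(x̂), with complementary slackness λ̂(g(x̂) + (ρ̂/2)‖x̂ − x‖²) = 0. Then ‖x̂ − x‖ ≤ M/ρ̂ and λ̂ ≤ 2M/√(2θ(ρ̂ − ρ)). -/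
noncomputable section

set_option maxHeartbeats 2000000 in
/-- Lemma 4 of the paper: under the uniform Slater condition,
`‖xhat − x‖ ≤ M/ρ̂` and the KKT multiplier satisfies `λ̂ ≤ 2M/√(2θ(ρ̂ − ρ))`. -/
theorem multiplier_bound_weakly_convex_constraint
    {d : ℕ} (X : Set (EuclideanSpace ℝ (Fin d)))
    (hXc : IsClosed X) (hXconv : Convex ℝ X)
    (f g : EuclideanSpace ℝ (Fin d) → ℝ)
    (subf subg : EuclideanSpace ℝ (Fin d) → Set (EuclideanSpace ℝ (Fin d)))
    (ρ ρh M θ : ℝ) (hρ0 : 0 ≤ ρ) (hρ : ρ < ρh) (hθ : 0 < θ)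
    -- `f` and `g` are `ρ`-weakly convex on `X` (subgradient inequalities)
    (hfwc : ∀ x' ∈ X, ∀ ζ ∈ subf x', ∀ z ∈ X,
      f z ≥ f x' + (inner ℝ ζ (z - x') : ℝ) - ρ / 2 * ‖z - x'‖ ^ 2)
    (hgwc : ∀ x' ∈ X, ∀ ζ ∈ subg x', ∀ z ∈ X,
      g z ≥ g x' + (inner ℝ ζ (z - x') : ℝ) - ρ / 2 * ‖z - x'‖ ^ 2)
    -- subgradients bounded by `M`
    (hMf : ∀ x ∈ X, ∀ ζ ∈ subf x, ‖ζ‖ ≤ M)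
    (hMg : ∀ x ∈ X, ∀ ζ ∈ subg x, ‖ζ‖ ≤ M)
    (x : EuclideanSpace ℝ (Fin d)) (hx : x ∈ X)
    -- uniform Slater point
    (y : EuclideanSpace ℝ (Fin d)) (hy : y ∈ X)
    (hslater : g y + ρh / 2 * ‖y - x‖ ^ 2 ≤ -θ)
    -- `xhat` minimizes `f(z) + (ρ̂/2)‖z − x‖²` over `{z ∈ X : g(z) + (ρ̂/2)‖z − x‖² ≤ 0}`
    (xhat : EuclideanSpace ℝ (Fin d)) (hxhatX : xhat ∈ X)
    (hxhatfeas : g xhat + ρh / 2 * ‖xhat - x‖ ^ 2 ≤ 0)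
    (hmin : ∀ z ∈ X, g z + ρh / 2 * ‖z - x‖ ^ 2 ≤ 0 →
      f xhat + ρh / 2 * ‖xhat - x‖ ^ 2 ≤ f z + ρh / 2 * ‖z - x‖ ^ 2)
    -- KKT conditions with multiplier `lam`
    (lam : ℝ) (hlam : 0 ≤ lam)
    (ζf ζg u : EuclideanSpace ℝ (Fin d))
    (hζf : ζf ∈ subf xhat) (hζg : ζg ∈ subg xhat) (hu : u ∈ normalCone X xhat)
    (hKKT : ζf + ρh • (xhat - x) + lam • (ζg + ρh • (xhat - x)) + u = 0)
    (hcs : lam * (g xhat + ρh / 2 * ‖xhat - x‖ ^ 2) = 0) :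
    ‖xhat - x‖ ≤ M / ρh ∧ lam ≤ 2 * M / Real.sqrt (2 * θ * (ρh - ρ)) := by

  have hρh : (0:ℝ) < ρh := lt_of_le_of_lt hρ0 hρ
  have hM0 : (0:ℝ) ≤ M := le_trans (norm_nonneg ζf) (hMf xhat hxhatX ζf hζf)
  set s := ‖xhat - x‖ with hs
  -- inner ℝ product of KKT with (xhat - x)
  have hinner : (inner ℝ (ζf + ρh • (xhat - x) + lam • (ζg + ρh • (xhat - x)) + u)
      (xhat - x) : ℝ) = 0 := by rw [hKKT]; exact inner_zero_left _
  have hux : (0:ℝ) ≤ inner ℝ u (xhat - x) := by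
    have := hu x hx
    have h2 : (inner ℝ u (x - xhat) : ℝ) ≤ 0 := this
    have : (inner ℝ u (x - xhat) : ℝ) = - inner ℝ u (xhat - x) := by
      rw [← inner_neg_right]; congr 1; abel
    linarith [h2, this ▸ h2]
  have hfx : -(M * s) ≤ (inner ℝ ζf (xhat - x) : ℝ) := by
    have h1 := abs_real_inner_le_norm ζf (xhat - x)
    have h2 := hMf xhat hxhatX ζf hζf
    have := abs_le.mp h1
    nlinarith [norm_nonneg (xhat - x)]
  have hgx : -(M * s) ≤ (inner ℝ ζg (xhat - x) : ℝ) := by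
    have h1 := abs_real_inner_le_norm ζg (xhat - x)
    have h2 := hMg xhat hxhatX ζg hζg
    have := abs_le.mp h1
    nlinarith [norm_nonneg (xhat - x)]
  have hexp : (inner ℝ ζf (xhat - x) : ℝ) + ρh * s ^ 2
      + lam * ((inner ℝ ζg (xhat - x) : ℝ) + ρh * s ^ 2) + (inner ℝ u (xhat - x) : ℝ) = 0 := by
    have := hinner
    simp only [inner_add_left, real_inner_smul_left, real_inner_self_eq_norm_sq] at this
    ring_nf at this ⊢
    linarith [this]
  have hdist : s ≤ M / ρh := by
    rcases eq_or_lt_of_le (norm_nonneg (xhat - x)) with h0 | h0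
    · rw [hs, ← h0]; positivity
    · rw [le_div_iff₀ hρh]
      have hg2 : lam * (-(M * s)) ≤ lam * (inner ℝ ζg (xhat - x) : ℝ) :=
        mul_le_mul_of_nonneg_left hgx hlam
      nlinarith [hexp, hfx, hux, hg2, h0, hlam, mul_nonneg hlam (le_of_lt h0)]
  refine ⟨hdist, ?_⟩
  -- multiplier bound
  have hsq : (0:ℝ) < 2 * θ * (ρh - ρ) := by nlinarith
  have hsqrt : (0:ℝ) < Real.sqrt (2 * θ * (ρh - ρ)) := Real.sqrt_pos.mpr hsq
  rcases eq_or_lt_of_le hlam with hl0 | hl0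
  · rw [← hl0]; positivity
  · -- lam > 0, complementary slackness gives active constraint
    have hact : g xhat + ρh / 2 * s ^ 2 = 0 := by
      rcases mul_eq_zero.mp hcs with h | h
      · exact absurd h.symm (ne_of_lt hl0)
      · exact h
    set w : EuclideanSpace ℝ (Fin d) := ζg + ρh • (xhat - x) + lam⁻¹ • u with hw
    -- strong convexity of the shifted constraint at y
    set t := ‖y - xhat‖ with ht
    have hid : ‖y - x‖ ^ 2 = s ^ 2 + 2 * (inner ℝ (xhat - x) (y - xhat) : ℝ) + t ^ 2 := by
      have : y - x = (xhat - x) + (y - xhat) := by abel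
      rw [this, norm_add_sq_real]
    have hgy := hgwc xhat hxhatX ζg hζg y hy
    have huy : (inner ℝ u (y - xhat) : ℝ) ≤ 0 := hu y hy
    have hwy : (inner ℝ w (y - xhat) : ℝ) ≤ -θ - (ρh - ρ) / 2 * t ^ 2 := by
      have hexpand : (inner ℝ w (y - xhat) : ℝ) = (inner ℝ ζg (y - xhat) : ℝ)
          + ρh * (inner ℝ (xhat - x) (y - xhat) : ℝ) + lam⁻¹ * (inner ℝ u (y - xhat) : ℝ) := by
        rw [hw, inner_add_left, inner_add_left, real_inner_smul_left, real_inner_smul_left]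
      have huy' : lam⁻¹ * (inner ℝ u (y - xhat) : ℝ) ≤ 0 :=
        mul_nonpos_of_nonneg_of_nonpos (le_of_lt (inv_pos.mpr hl0)) huy
      have hid' : ρh / 2 * ‖y - x‖ ^ 2
          = ρh / 2 * s ^ 2 + ρh * (inner ℝ (xhat - x) (y - xhat) : ℝ) + ρh / 2 * t ^ 2 := by
        rw [hid]; ring
      rw [← ht] at hgy
      linarith [hexpand, huy', hgy, hact, hslater, hid']
    have htpos : (0:ℝ) < t := by
      by_contra h
      push_neg at h
      have htn : (0:ℝ) ≤ t := by rw [ht]; exact norm_nonneg _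
      have ht0 : t = 0 := le_antisymm h htn
      have hyx : y - xhat = 0 := by
        apply norm_eq_zero.mp; rw [← ht]; exact ht0
      have hz : (inner ℝ w (y - xhat) : ℝ) = 0 := by rw [hyx, inner_zero_right]
      rw [hz] at hwy
      have hnn : (0:ℝ) ≤ (ρh - ρ) / 2 * t ^ 2 := by
        have := sq_nonneg t
        nlinarith
      linarith [hθ, hwy, hnn]
    have hwt : Real.sqrt (2 * θ * (ρh - ρ)) ≤ ‖w‖ := by
      have h1 : θ + (ρh - ρ) / 2 * t ^ 2 ≤ ‖w‖ * t := by
        have habs := abs_real_inner_le_norm w (y - xhat)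
        have h := (abs_le.mp habs).1
        rw [← ht] at h
        linarith [h, hwy]
      have h2 : 2 * θ * (ρh - ρ) ≤ ‖w‖ ^ 2 := by
        have hpos : (0:ℝ) ≤ θ + (ρh - ρ) / 2 * t ^ 2 := by nlinarith [sq_nonneg t]
        have hsq2 := mul_le_mul h1 h1 hpos (le_trans hpos h1)
        nlinarith [hsq2, sq_nonneg (θ - (ρh - ρ) / 2 * t ^ 2), mul_pos htpos htpos]
      calc Real.sqrt (2 * θ * (ρh - ρ)) ≤ Real.sqrt (‖w‖ ^ 2) := Real.sqrt_le_sqrt h2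
        _ = ‖w‖ := Real.sqrt_sq (norm_nonneg w)
    -- lam • w = -(ζf + ρh • (xhat - x))
    have hlw : lam • w = -(ζf + ρh • (xhat - x)) := by
      rw [hw]
      have : lam • (ζg + ρh • (xhat - x) + lam⁻¹ • u)
          = lam • (ζg + ρh • (xhat - x)) + u := by
        rw [smul_add, smul_smul, mul_inv_cancel₀ (ne_of_gt hl0), one_smul]
      rw [this]
      linear_combination (norm := module) hKKT
    have hnorm : lam * ‖w‖ ≤ 2 * M := by
      have h1 : ‖lam • w‖ = lam * ‖w‖ := by
        rw [norm_smul, Real.norm_of_nonneg hlam]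
      have h2 : ‖lam • w‖ ≤ ‖ζf‖ + ρh * s := by
        rw [hlw, norm_neg]
        calc ‖ζf + ρh • (xhat - x)‖ ≤ ‖ζf‖ + ‖ρh • (xhat - x)‖ := norm_add_le _ _
          _ = ‖ζf‖ + ρh * s := by rw [norm_smul, Real.norm_of_nonneg (le_of_lt hρh)]
      have h3 : ρh * s ≤ M := by
        rw [le_div_iff₀ hρh] at hdist; linarith [hdist]
      have h4 := hMf xhat hxhatX ζf hζf
      linarith
    rw [le_div_iff₀ hsqrt]
    calc lam * Real.sqrt (2 * θ * (ρh - ρ)) ≤ lam * ‖w‖ :=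
          mul_le_mul_of_nonneg_left hwt hlam
      _ ≤ 2 * M := hnorm
end
end

section
/- Subgradient norm lower bound for convex constraints via Slater and bounded feasible set: let g be convex on closed convex X, suppose g(x_feas) < 0 for some x_feas in the relative interior of X, and suppose ‖x − x'‖ ≤ D for all x, x' in S := {x ∈ X : g(x) ≤ 0}. Then for every x ∈ X with g(x) = 0, every ζ_g ∈ ∂g(x), and every u ∈ N_X(x), one has ‖ζ_g + u‖ ≥ ν' := −g(x_feas)/D > 0. -/
noncomputable section

/-- subgradient norm lower bound for a convex constraint via
Slater's condition and boundedness of the feasible set `S = {x ∈ X : g x ≤ 0}`: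
for all `x ∈ X` with `g x = 0`, all `ζ ∈ ∂g(x)` and `u ∈ N_X(x)`,
`‖ζ + u‖ ≥ ν' := −g(x_feas)/D > 0`. -/
theorem subgradient_norm_lower_bound_convex_slater
    {d : ℕ} (X : Set (EuclideanSpace ℝ (Fin d)))
    (hXc : IsClosed X) (hXconv : Convex ℝ X)
    (g : EuclideanSpace ℝ (Fin d) → ℝ)
    (subg : EuclideanSpace ℝ (Fin d) → Set (EuclideanSpace ℝ (Fin d)))
    -- `g` is convex on `X` (subgradient inequality)
    (hgc : ∀ x' ∈ X, ∀ ζ ∈ subg x', ∀ z ∈ X,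
      g z ≥ g x' + (inner ℝ ζ (z - x') : ℝ))
    -- Slater's condition with a point in the relative interior
    (xfeas : EuclideanSpace ℝ (Fin d))
    (hxfeas : xfeas ∈ intrinsicInterior ℝ X) (hslater : g xfeas < 0)
    -- feasible set has diameter at most `D`
    (D : ℝ) (hD : 0 < D)
    (hdiam : ∀ x ∈ X, g x ≤ 0 → ∀ x' ∈ X, g x' ≤ 0 → ‖x - x'‖ ≤ D) :
    0 < -g xfeas / D ∧
      ∀ x ∈ X, g x = 0 → ∀ ζ ∈ subg x, ∀ u ∈ normalCone X x,
        -g xfeas / D ≤ ‖ζ + u‖ := by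
  constructor
  · exact div_pos (neg_pos.2 hslater) hD
  intro x hx hgx ζ hζ u hu
  have hxfX : xfeas ∈ X := intrinsicInterior_subset hxfeas
  have h1 : g xfeas ≥ (inner ℝ ζ (xfeas - x) : ℝ) := by
    have := hgc x hx ζ hζ xfeas hxfX
    linarith [this, hgx]
  have h2 : (inner ℝ u (xfeas - x) : ℝ) ≤ 0 := hu xfeas hxfX
  have h3 : (inner ℝ (ζ + u) (xfeas - x) : ℝ) ≤ g xfeas := by
    rw [inner_add_left]; linarith
  have h4 : -g xfeas ≤ ‖ζ + u‖ * ‖xfeas - x‖ := by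
    have := abs_real_inner_le_norm (ζ + u) (xfeas - x)
    have := neg_le_abs (inner ℝ (ζ + u) (xfeas - x) : ℝ)
    linarith
  have h5 : ‖xfeas - x‖ ≤ D := hdiam xfeas hxfX hslater.le x hx hgx.le
  have h6 : -g xfeas ≤ ‖ζ + u‖ * D :=
    h4.trans (mul_le_mul_of_nonneg_left h5 (norm_nonneg _))
  rw [div_le_iff₀ hD]
  exact h6
end
end

section
/- Polyak-stepsize contraction for convex g₊ with damped stepsize: let g₊ = max{g, 0} with g convex and M-Lipschitz on closed convex X, S = {x ∈ X : g₊(x) = 0} nonempty, and suppose ν'·dist(x, S) ≤ g₊(x) for all x ∈ X with 0 < ν' ≤ M. If x⁺ = proj_X(x − η ζ) with ζ ∈ ∂g₊(x), ζ ≠ 0, and η = ν' g₊(x)/(2M‖ζ‖²), then dist²(x⁺, S) ≤ (1 − 3ν'³/(4M³))·dist²(x, S). If ζ = 0, then x ∈ S. -/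
set_option maxHeartbeats 1000000

noncomputable section

/-- Lemma B.1 of the paper: Polyak-stepsize contraction for
convex `g₊ = max{g, 0}` with the damped stepsize `η = ν' g₊(x)/(2M‖ζ‖²)`:
`dist²(x⁺, S) ≤ (1 − 3ν'³/(4M³))·dist²(x, S)`; and if `ζ = 0` then `x ∈ S`. -/
theorem damped_polyak_step_contracts_distance_convex
    {d : ℕ} (X : Set (EuclideanSpace ℝ (Fin d)))
    (hXc : IsClosed X) (hXconv : Convex ℝ X) (hXne : X.Nonempty)
    (g : EuclideanSpace ℝ (Fin d) → ℝ) (M ν' : ℝ)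
    -- `g` is convex and `M`-Lipschitz on `X`
    (hgconv : ConvexOn ℝ X g)
    (hLip : ∀ y ∈ X, ∀ z ∈ X, |g y - g z| ≤ M * ‖y - z‖)
    -- subdifferential of `g₊ = max{g, 0}` (convex subgradient inequality, `M`-bounded)
    (subgp : EuclideanSpace ℝ (Fin d) → Set (EuclideanSpace ℝ (Fin d)))
    (hsubgp : ∀ x' ∈ X, ∀ ζ ∈ subgp x', ∀ z ∈ X,
      max (g z) 0 ≥ max (g x') 0 + (inner ℝ ζ (z - x') : ℝ))
    (hMgp : ∀ x ∈ X, ∀ ζ ∈ subgp x, ‖ζ‖ ≤ M)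
    (S : Set (EuclideanSpace ℝ (Fin d))) (hSdef : S = {x ∈ X | max (g x) 0 = 0})
    (hSne : S.Nonempty)
    (hν1 : 0 < ν') (hν2 : ν' ≤ M)
    -- global linear error bound
    (heb : ∀ x ∈ X, ν' * Metric.infDist x S ≤ max (g x) 0)
    (x : EuclideanSpace ℝ (Fin d)) (hx : x ∈ X)
    (ζ : EuclideanSpace ℝ (Fin d)) (hζ : ζ ∈ subgp x) :
    (∀ xp : EuclideanSpace ℝ (Fin d), ζ ≠ 0 → xp ∈ X →
      -- `xp = proj_X (x − η ζ)` with `η = ν' g₊(x)/(2M‖ζ‖²)`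
      (∀ y ∈ X, ‖xp - (x - (ν' * max (g x) 0 / (2 * M * ‖ζ‖ ^ 2)) • ζ)‖ ≤
        ‖y - (x - (ν' * max (g x) 0 / (2 * M * ‖ζ‖ ^ 2)) • ζ)‖) →
      Metric.infDist xp S ^ 2 ≤ (1 - 3 * ν' ^ 3 / (4 * M ^ 3)) * Metric.infDist x S ^ 2) ∧
    (ζ = 0 → x ∈ S) := by
  have hM : (0:ℝ) < M := lt_of_lt_of_le hν1 hν2
  have hG0 : (0:ℝ) ≤ max (g x) 0 := le_max_right _ _
  -- S is closed
  have hScl : IsClosed S := by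
    rw [hSdef]
    apply IsSeqClosed.isClosed
    intro u p hu hp
    have hpX : p ∈ X := hXc.isSeqClosed (fun n => (hu n).1) hp
    have hgle : ∀ n, g (u n) ≤ 0 := fun n => max_eq_right_iff.mp (hu n).2
    have hbound : ∀ n, g p ≤ M * ‖p - u n‖ := by
      intro n
      have h1 := hLip p hpX (u n) (hu n).1
      have h2 := abs_le.mp h1
      linarith [hgle n, h2.2]
    have htend : Filter.Tendsto (fun n => M * ‖p - u n‖) Filter.atTop (nhds 0) := by
      have h1 : Filter.Tendsto (fun n => ‖p - u n‖) Filter.atTop (nhds 0) := by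
        have := (tendsto_iff_dist_tendsto_zero).mp hp
        simpa [dist_eq_norm, norm_sub_rev] using this
      simpa using h1.const_mul M
    have hgp : g p ≤ 0 := ge_of_tendsto' htend hbound
    exact ⟨hpX, max_eq_right hgp⟩
  constructor
  · intro xp hζ0 hxpX hmin
    have hζn : (0:ℝ) < ‖ζ‖ := norm_pos_iff.mpr hζ0
    set G := max (g x) 0 with hGdef
    set η := ν' * G / (2 * M * ‖ζ‖ ^ 2) with hηdef
    have hη0 : 0 ≤ η := by positivity
    set u := x - η • ζ with hudef
    -- the nearest point of S to x
    obtain ⟨xd, hxdS, hxd⟩ := hScl.exists_infDist_eq_dist hSne x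
    have hxdX : xd ∈ X := by rw [hSdef] at hxdS; exact hxdS.1
    have hgxd : max (g xd) 0 = 0 := by rw [hSdef] at hxdS; exact hxdS.2
    -- variational inequality for the projection xp
    haveI : Nonempty ↥X := ⟨⟨xp, hxpX⟩⟩
    have hbdd : BddBelow (Set.range (fun w : X => ‖u - (w : EuclideanSpace ℝ (Fin d))‖)) := by
      refine ⟨0, ?_⟩
      rintro r ⟨w, rfl⟩
      exact norm_nonneg _
    have hinf : ‖u - xp‖ = ⨅ w : X, ‖u - w‖ := by
      apply le_antisymm
      · apply le_ciInf
        intro w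
        rw [norm_sub_rev, norm_sub_rev u]
        exact hmin w w.2
      · exact ciInf_le hbdd ⟨xp, hxpX⟩
    have hVI : ∀ w ∈ X, (inner ℝ (u - xp) (w - xp) : ℝ) ≤ 0 :=
      (norm_eq_iInf_iff_real_inner_le_zero hXconv hxpX).mp hinf
    -- nonexpansiveness: ‖xp - xd‖² ≤ ‖u - xd‖²
    have hstep : ‖xp - xd‖ ^ 2 ≤ ‖u - xd‖ ^ 2 := by
      have h1 : u - xd = (u - xp) + (xp - xd) := by abel
      have h2 : ‖u - xd‖ ^ 2 = ‖u - xp‖ ^ 2 + 2 * (inner ℝ (u - xp) (xp - xd) : ℝ)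
          + ‖xp - xd‖ ^ 2 := by
        rw [h1, @norm_add_sq_real]
      have h3 : (inner ℝ (u - xp) (xp - xd) : ℝ) ≥ 0 := by
        have := hVI xd hxdX
        have h4 : (inner ℝ (u - xp) (xd - xp) : ℝ) = -(inner ℝ (u - xp) (xp - xd) : ℝ) := by
          rw [← inner_neg_right]; congr 1; abel
        linarith [h4 ▸ this]
      nlinarith [sq_nonneg ‖u - xp‖]
    -- subgradient inequality at the nearest point
    have hsub : G ≤ (inner ℝ ζ (x - xd) : ℝ) := by
      have := hsubgp x hx ζ hζ xd hxdX
      rw [hgxd] at this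
      have h4 : (inner ℝ ζ (xd - x) : ℝ) = -(inner ℝ ζ (x - xd) : ℝ) := by
        rw [← inner_neg_right]; congr 1; abel
      rw [h4] at this
      linarith
    -- expand ‖u - xd‖²
    have hexp : ‖u - xd‖ ^ 2 = ‖x - xd‖ ^ 2 - 2 * η * (inner ℝ ζ (x - xd) : ℝ)
        + η ^ 2 * ‖ζ‖ ^ 2 := by
      have h1 : u - xd = (x - xd) - η • ζ := by rw [hudef]; abel
      rw [h1, @norm_sub_sq_real, real_inner_smul_right, norm_smul,
        mul_pow, Real.norm_eq_abs, sq_abs]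
      have h2 : (inner ℝ (x - xd) ζ : ℝ) = (inner ℝ ζ (x - xd) : ℝ) := real_inner_comm _ _
      rw [h2]; ring
    -- key numerical estimate
    have hD : ν' * ‖x - xd‖ ≤ G := by
      have := heb x hx
      rw [hxd, dist_eq_norm] at this
      exact this
    have hDn : 0 ≤ ‖x - xd‖ := norm_nonneg _
    have hζM : ‖ζ‖ ≤ M := hMgp x hx ζ hζ
    have hkey : ‖x - xd‖ ^ 2 - 2 * η * (inner ℝ ζ (x - xd) : ℝ) + η ^ 2 * ‖ζ‖ ^ 2 ≤
        (1 - 3 * ν' ^ 3 / (4 * M ^ 3)) * ‖x - xd‖ ^ 2 := by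
      have h1 : 2 * η * G ≤ 2 * η * (inner ℝ ζ (x - xd) : ℝ) := by
        apply mul_le_mul_of_nonneg_left hsub (by positivity)
      have h2 : ‖x - xd‖ ^ 2 - 2 * η * G + η ^ 2 * ‖ζ‖ ^ 2 ≤
          (1 - 3 * ν' ^ 3 / (4 * M ^ 3)) * ‖x - xd‖ ^ 2 := by
        have hc : (0:ℝ) < ‖ζ‖ ^ 2 := by positivity
        have hc2 : ‖ζ‖ ^ 2 ≤ M ^ 2 := by nlinarith [norm_nonneg ζ]
        have hG2 : ν' ^ 2 * ‖x - xd‖ ^ 2 ≤ G ^ 2 := by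
          nlinarith [mul_le_mul hD hD (by positivity) hG0]
        have e1 : 2 * η * G = ν' * G ^ 2 / (M * ‖ζ‖ ^ 2) := by
          rw [hηdef]; field_simp
        have e2 : η ^ 2 * ‖ζ‖ ^ 2 = ν' ^ 2 * G ^ 2 / (4 * M ^ 2 * ‖ζ‖ ^ 2) := by
          rw [hηdef]; field_simp; ring
        have h3 : 3 * ν' ^ 3 / (4 * M ^ 3) * ‖x - xd‖ ^ 2 ≤
            ν' * G ^ 2 / (M * ‖ζ‖ ^ 2) - ν' ^ 2 * G ^ 2 / (4 * M ^ 2 * ‖ζ‖ ^ 2) := by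
          rw [div_mul_eq_mul_div, div_sub_div _ _ (by positivity) (by positivity),
            div_le_div_iff₀ (by positivity) (by positivity)]
          nlinarith [mul_le_mul_of_nonneg_left hG2
              (show (0:ℝ) ≤ 12 * ν' * M ^ 3 * (‖ζ‖ ^ 2) ^ 2 by positivity),
            mul_le_mul_of_nonneg_left hc2
              (show (0:ℝ) ≤ 12 * ν' * G ^ 2 * M ^ 3 * ‖ζ‖ ^ 2 by positivity),
            mul_le_mul_of_nonneg_left hν2
              (show (0:ℝ) ≤ 4 * ν' * G ^ 2 * M ^ 4 * ‖ζ‖ ^ 2 by positivity)]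
        have e3 : (1 - 3 * ν' ^ 3 / (4 * M ^ 3)) * ‖x - xd‖ ^ 2 =
            ‖x - xd‖ ^ 2 - 3 * ν' ^ 3 / (4 * M ^ 3) * ‖x - xd‖ ^ 2 := by ring
        rw [e1, e2, e3]
        linarith
      linarith
    -- conclude
    have hfin : Metric.infDist xp S ≤ ‖xp - xd‖ := by
      rw [← dist_eq_norm]
      exact Metric.infDist_le_dist_of_mem hxdS
    have hfin2 : Metric.infDist xp S ^ 2 ≤ ‖xp - xd‖ ^ 2 :=
      pow_le_pow_left₀ Metric.infDist_nonneg hfin 2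
    have hxdist : Metric.infDist x S ^ 2 = ‖x - xd‖ ^ 2 := by
      rw [hxd, dist_eq_norm]
    rw [hxdist]
    calc Metric.infDist xp S ^ 2 ≤ ‖xp - xd‖ ^ 2 := hfin2
      _ ≤ ‖u - xd‖ ^ 2 := hstep
      _ = _ := hexp
      _ ≤ _ := hkey
  · intro h0
    obtain ⟨s, hs⟩ := hSne
    rw [hSdef] at hs
    have := hsubgp x hx ζ hζ s hs.1
    rw [h0, hs.2] at this
    simp only [inner_zero_left] at this
    rw [hSdef]
    exact ⟨hx, le_antisymm (by linarith) hG0⟩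
end
end
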